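/- Let a, b ≥ -1/2 with 0 < |a - b| ≤ 1. Then there exists a constant C₂, depending only on a and b, such that for every integer k ≥ 10 and all 0 < y < x, the partial derivative in x of the kernel satisfies |∂K_{a+k}^{b+k}(x,y)/∂x| ≤ C₂ / (x - y)². -/

import Mathlib

open MeasureTheory Real Set

lemma aux_texp (t θ : ℝ) (ht : 0 ≤ t) (hθ0 : 0 ≤ θ) (hθ2 : θ ≤ 2) :
    t ^ θ * Real.exp (-t) ≤ 4 := by
  rcases le_or_gt t 1 with h | h
  · have h1 : t ^ θ ≤ 1 := Real.rpow_le_one ht h hθ0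
    have h2 : Real.exp (-t) ≤ 1 := Real.exp_le_one_iff.mpr (by linarith)
    nlinarith [Real.rpow_nonneg ht θ, Real.exp_pos (-t)]
  · have h1 : t ^ θ ≤ t ^ (2:ℝ) := Real.rpow_le_rpow_of_exponent_le h.le hθ2
    have h2 : t ^ (2:ℝ) = t ^ (2:ℕ) := by
      rw [← Real.rpow_natCast t 2]; norm_num
    have h3 : t ≤ 2 * Real.exp (t/2) := by
      have := Real.add_one_le_exp (t/2); linarith
    have h4 : Real.exp (t/2) * Real.exp (t/2) = Real.exp t := by
      rw [← Real.exp_add]; ring_nf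
    have h5 : Real.exp t * Real.exp (-t) = 1 := by
      rw [← Real.exp_add]; simp
    have h6 : (0:ℝ) < Real.exp (-t) := Real.exp_pos _
    have h7 : t ^ (2:ℕ) ≤ 4 * Real.exp t := by nlinarith [mul_self_le_mul_self ht h3]
    calc t ^ θ * Real.exp (-t) ≤ (4 * Real.exp t) * Real.exp (-t) := by
          apply mul_le_mul_of_nonneg_right _ h6.le
          rw [h2] at h1; linarith
    _ = 4 := by rw [mul_assoc, h5, mul_one]

lemma aux_mu_r (μ r θ : ℝ) (hμ : 0 < μ) (hr0 : 0 < r) (hr1 : r < 1)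
    (hθ0 : 0 ≤ θ) (hθ2 : θ ≤ 2) : μ ^ θ * r ^ μ * (1 - r) ^ θ ≤ 4 := by
  have h1 : r ^ μ ≤ Real.exp (-(μ * (1 - r))) := by
    have hre : r ≤ Real.exp (r - 1) := by have := Real.add_one_le_exp (r - 1); linarith
    calc r ^ μ ≤ (Real.exp (r - 1)) ^ μ := Real.rpow_le_rpow hr0.le hre hμ.le
    _ = Real.exp (-(μ * (1 - r))) := by
        rw [← Real.exp_mul]; congr 1; ring
  have h2 : μ ^ θ * (1 - r) ^ θ = (μ * (1 - r)) ^ θ := (Real.mul_rpow hμ.le (by linarith)).symm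
  have hμθ : (0:ℝ) ≤ μ ^ θ := Real.rpow_nonneg hμ.le θ
  have hrθ : (0:ℝ) ≤ (1 - r) ^ θ := Real.rpow_nonneg (by linarith) θ
  calc μ ^ θ * r ^ μ * (1 - r) ^ θ ≤ μ ^ θ * Real.exp (-(μ * (1 - r))) * (1 - r) ^ θ :=
        mul_le_mul_of_nonneg_right (mul_le_mul_of_nonneg_left h1 hμθ) hrθ
  _ = (μ * (1 - r)) ^ θ * Real.exp (-(μ * (1 - r))) := by rw [← h2]; ring
  _ ≤ 4 := aux_texp _ _ (by nlinarith) hθ0 hθ2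

lemma aux_int_rpow (c : ℝ) (hc : -1 < c) :
    IntegrableOn (fun s : ℝ => s ^ c) (Ioo (0:ℝ) 1) := by
  have h := intervalIntegral.intervalIntegrable_rpow' (a := 0) (b := 1) hc
  rwa [intervalIntegrable_iff_integrableOn_Ioo_of_le (by norm_num)] at h

lemma aux_integrable (y X c1 c2 e : ℝ) (hc1 : -1 < c1) (hc2 : 0 ≤ c2) (he : 0 ≤ e)
    (hB : 0 < X ^ 2 - y ^ 2) (hy : 0 ≤ y) :
    IntegrableOn (fun s => s ^ c1 * (1 - s) ^ c2 / (X ^ 2 - y ^ 2 * s) ^ e)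
      (Ioo (0:ℝ) 1) := by
  have hBpos : (0:ℝ) < (X ^ 2 - y ^ 2) ^ e := Real.rpow_pos_of_pos hB e
  have hg : IntegrableOn (fun s : ℝ => ((X ^ 2 - y ^ 2) ^ e)⁻¹ * s ^ c1) (Ioo (0:ℝ) 1) :=
    (aux_int_rpow c1 hc1).const_mul _
  refine Integrable.mono' hg ?_ ?_
  · apply Measurable.aestronglyMeasurable
    fun_prop
  · rw [ae_restrict_iff' measurableSet_Ioo]
    refine ae_of_all _ fun s hs => ?_
    obtain ⟨hs0, hs1⟩ := hs
    have hQ : 0 < X ^ 2 - y ^ 2 * s := by nlinarith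
    have hQB : X ^ 2 - y ^ 2 ≤ X ^ 2 - y ^ 2 * s := by nlinarith
    have h1 : (0:ℝ) ≤ s ^ c1 := Real.rpow_nonneg hs0.le c1
    have h2 : (0:ℝ) ≤ (1 - s) ^ c2 := Real.rpow_nonneg (by linarith) c2
    have h3 : (0:ℝ) < (X ^ 2 - y ^ 2 * s) ^ e := Real.rpow_pos_of_pos hQ e
    rw [Real.norm_eq_abs, abs_of_nonneg (by positivity)]
    have h4 : (1 - s) ^ c2 ≤ 1 := Real.rpow_le_one (by linarith) (by linarith) hc2
    have h5 : (X ^ 2 - y ^ 2) ^ e ≤ (X ^ 2 - y ^ 2 * s) ^ e :=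
      Real.rpow_le_rpow hB.le hQB he
    calc s ^ c1 * (1 - s) ^ c2 / (X ^ 2 - y ^ 2 * s) ^ e
        ≤ s ^ c1 * 1 / (X ^ 2 - y ^ 2) ^ e := by
          apply div_le_div₀ (by positivity) _ hBpos h5
          exact mul_le_mul_of_nonneg_left h4 h1
    _ = ((X ^ 2 - y ^ 2) ^ e)⁻¹ * s ^ c1 := by ring

lemma aux_exp_int (c m : ℝ) (hc : -1 < c) (hm0 : 0 < m) :
    IntegrableOn (fun t : ℝ => t ^ c * Real.exp (-(m * t))) (Ioi (0:ℝ)) := by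
  have h0 : IntegrableOn (fun u : ℝ => Real.exp (-u) * u ^ (c + 1 - 1)) (Ioi (0:ℝ)) :=
    Real.GammaIntegral_convergent (by linarith)
  have h1 : IntegrableOn (fun t : ℝ => Real.exp (-(m * t)) * (m * t) ^ (c + 1 - 1))
      (Ioi (0:ℝ)) := by
    have := (integrableOn_Ioi_comp_mul_left_iff
      (fun u : ℝ => Real.exp (-u) * u ^ (c + 1 - 1)) 0 hm0).mpr
    simpa using this (by simpa using h0)
  have h2 : IntegrableOn (fun t : ℝ => m ^ c * (t ^ c * Real.exp (-(m * t)))) (Ioi (0:ℝ)) := by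
    apply h1.congr_fun _ measurableSet_Ioi
    intro t ht
    show Real.exp (-(m * t)) * (m * t) ^ (c + 1 - 1) = m ^ c * (t ^ c * Real.exp (-(m * t)))
    rw [show c + 1 - 1 = c by ring, Real.mul_rpow hm0.le (le_of_lt ht)]
    ring
  have h3 : IntegrableOn (fun t : ℝ => (m ^ c)⁻¹ * (m ^ c * (t ^ c * Real.exp (-(m * t)))))
      (Ioi (0:ℝ)) := h2.const_mul _
  apply h3.congr_fun _ measurableSet_Ioi
  intro t ht
  have hmc : (m:ℝ) ^ c ≠ 0 := ne_of_gt (Real.rpow_pos_of_pos hm0 c)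
  show (m ^ c)⁻¹ * (m ^ c * (t ^ c * Real.exp (-(m * t)))) = t ^ c * Real.exp (-(m * t))
  field_simp

lemma aux_beta_le (c m : ℝ) (hc : -1 < c) (hm : 1 ≤ m) :
    ∫ v in Ioo (0:ℝ) 1, v ^ c * (1 - v) ^ m ≤ (1 / m) ^ (c + 1) * Real.Gamma (c + 1) := by
  have hm0 : (0:ℝ) < m := by linarith
  have hExpInt := aux_exp_int c m hc hm0
  have key : ∫ t in Ioi (0:ℝ), t ^ c * Real.exp (-(m * t)) = (1 / m) ^ (c + 1) * Real.Gamma (c + 1) := by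
    have := Real.integral_rpow_mul_exp_neg_mul_Ioi (a := c + 1) (r := m) (by linarith) hm0
    rw [show c + 1 - 1 = c by ring] at this
    rw [this]
  rw [← key]
  have step1 : ∫ v in Ioo (0:ℝ) 1, v ^ c * (1 - v) ^ m
      ≤ ∫ v in Ioo (0:ℝ) 1, v ^ c * Real.exp (-(m * v)) := by
    apply setIntegral_mono_on
    · -- integrability of LHS
      have := aux_integrable 0 1 c m 0 hc hm0.le le_rfl (by norm_num) le_rfl
      simpa using this
    · exact hExpInt.mono_set Ioo_subset_Ioi_self
    · exact measurableSet_Ioo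
    · intro v hv
      obtain ⟨hv0, hv1⟩ := hv
      have h1 : 1 - v ≤ Real.exp (-v) := by
        have := Real.add_one_le_exp (-v); linarith
      have h2 : (1 - v) ^ m ≤ (Real.exp (-v)) ^ m :=
        Real.rpow_le_rpow (by linarith) h1 hm0.le
      have h3 : (Real.exp (-v)) ^ m = Real.exp (-(m * v)) := by
        rw [← Real.exp_mul]; congr 1; ring
      have h4 : (0:ℝ) ≤ v ^ c := Real.rpow_nonneg hv0.le c
      rw [h3] at h2
      exact mul_le_mul_of_nonneg_left h2 h4
  refine step1.trans ?_
  apply setIntegral_mono_set hExpInt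
  · filter_upwards [ae_restrict_mem measurableSet_Ioi] with t ht
    have h4 : (0:ℝ) ≤ t ^ c := Real.rpow_nonneg (le_of_lt ht) c
    simpa using mul_nonneg h4 (Real.exp_pos (-(m*t))).le

  · exact HasSubset.Subset.eventuallyLE Ioo_subset_Ioi_self

lemma aux_beta_subst (p q A B : ℝ) (hp : 0 < p) (hq : 0 < q) (hB : 0 < B) (hBA : B ≤ A) :
    ∫ s in Ioo (0:ℝ) 1, s ^ (p-1) * (1-s) ^ (q-1) * (A*(1-s) + B*s) ^ (-(p+q))
      = (A ^ q * B ^ p)⁻¹ * ∫ v in Ioo (0:ℝ) 1, v ^ (p-1) * (1-v) ^ (q-1) := by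
  have hA : 0 < A := lt_of_lt_of_le hB hBA
  set f : ℝ → ℝ := fun s => B * s / (A - (A - B) * s) with hf_def
  have hQpos : ∀ s ∈ Ioo (0:ℝ) 1, 0 < A - (A - B) * s := by
    intro s hs; obtain ⟨h0, h1⟩ := hs; nlinarith
  -- derivative
  have hf' : ∀ s ∈ Ioo (0:ℝ) 1,
      HasDerivWithinAt f (A * B / (A - (A - B) * s) ^ 2) (Ioo (0:ℝ) 1) s := by
    intro s hs
    have hQ := hQpos s hs
    have h1 : HasDerivAt (fun s : ℝ => B * s) B s := by
      simpa using (hasDerivAt_id s).const_mul B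
    have h2 : HasDerivAt (fun s : ℝ => A - (A - B) * s) (-(A - B)) s := by
      simpa using ((hasDerivAt_id s).const_mul (A - B)).const_sub A
    have h3 := h1.div h2 (ne_of_gt hQ)
    have : (B * (A - (A - B) * s) - B * s * -(A - B)) / (A - (A - B) * s) ^ 2
        = A * B / (A - (A - B) * s) ^ 2 := by ring_nf
    rw [this] at h3
    exact h3.hasDerivWithinAt
  -- injectivity
  have hinj : InjOn f (Ioo (0:ℝ) 1) := by
    intro s1 h1 s2 h2 heq
    have hQ1 := hQpos s1 h1
    have hQ2 := hQpos s2 h2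
    rw [hf_def] at heq
    simp only [] at heq
    rw [div_eq_div_iff (ne_of_gt hQ1) (ne_of_gt hQ2)] at heq
    have h3 : B * A * s1 = B * A * s2 := by nlinarith [heq]
    exact mul_left_cancel₀ (by positivity) h3
  -- image
  have himg : f '' Ioo (0:ℝ) 1 = Ioo (0:ℝ) 1 := by
    ext v
    constructor
    · rintro ⟨s, hs, rfl⟩
      have hQ := hQpos s hs
      obtain ⟨h0, h1⟩ := hs
      constructor
      · exact div_pos (by positivity) hQ
      · rw [div_lt_one hQ]; nlinarith
    · intro hv
      obtain ⟨hv0, hv1⟩ := hv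
      have hden : 0 < B + (A - B) * v := by nlinarith
      refine ⟨A * v / (B + (A - B) * v), ⟨?_, ?_⟩, ?_⟩
      · exact div_pos (by positivity) hden
      · rw [div_lt_one hden]; nlinarith
      · rw [hf_def]
        simp only []
        rw [div_eq_iff (ne_of_gt _)]
        · rw [show A - (A - B) * (A * v / (B + (A - B) * v)) = A * B / (B + (A - B) * v) by
            field_simp
            ring]
          ring
        · have h5 : A - (A - B) * (A * v / (B + (A - B) * v))
              = A * B / (B + (A - B) * v) := by
            field_simp
            ring
          rw [h5]
          positivity
  -- change of variables
  have hcov := integral_image_eq_integral_abs_deriv_smul measurableSet_Ioo hf' hinj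
    (fun v => v ^ (p-1) * (1-v) ^ (q-1))
  rw [himg] at hcov
  -- pointwise simplification of RHS
  have hpt : ∀ s ∈ Ioo (0:ℝ) 1,
      |A * B / (A - (A - B) * s) ^ 2| • (f s ^ (p-1) * (1 - f s) ^ (q-1))
        = (A ^ q * B ^ p) * (s ^ (p-1) * (1-s) ^ (q-1) * (A*(1-s) + B*s) ^ (-(p+q))) := by
    intro s hs
    have hQ := hQpos s hs
    obtain ⟨h0, h1⟩ := hs
    have hfs : f s = B * s / (A - (A - B) * s) := rfl
    have h1fs : 1 - f s = A * (1 - s) / (A - (A - B) * s) := by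
      rw [hfs, one_sub_div hQ.ne']; congr 1; ring
    have hQeq : A * (1 - s) + B * s = A - (A - B) * s := by ring
    set Q : ℝ := A - (A - B) * s with hQdef
    rw [smul_eq_mul, abs_of_pos (div_pos (mul_pos hA hB) (pow_pos hQ 2)), hfs, h1fs, hQeq]
    rw [Real.div_rpow (mul_pos hB h0).le hQ.le,
      Real.div_rpow (mul_pos hA (by linarith : (0:ℝ) < 1 - s)).le hQ.le,
      Real.mul_rpow hB.le h0.le, Real.mul_rpow hA.le (by linarith)]
    rw [Real.rpow_neg hQ.le]
    have hQ2 : (Q:ℝ) ^ (2:ℕ) = Q ^ (2:ℝ) := by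
      rw [← Real.rpow_natCast Q 2]; norm_num
    have hQsum : Q ^ (p+q) = Q ^ (2:ℝ) * (Q ^ (p-1) * Q ^ (q-1)) := by
      rw [← Real.rpow_add hQ, ← Real.rpow_add hQ]; congr 1; ring
    have hAq : A ^ q = A * A ^ (q-1) := by
      nth_rewrite 2 [show A = A ^ (1:ℝ) by rw [Real.rpow_one]]
      rw [← Real.rpow_add hA]; congr 1; ring
    have hBp : B ^ p = B * B ^ (p-1) := by
      nth_rewrite 2 [show B = B ^ (1:ℝ) by rw [Real.rpow_one]]
      rw [← Real.rpow_add hB]; congr 1; ring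
    rw [hQ2, hAq, hBp, hQsum]
    have e1 : (0:ℝ) < Q ^ (2:ℝ) := Real.rpow_pos_of_pos hQ _
    have e2 : (0:ℝ) < Q ^ (p-1) := Real.rpow_pos_of_pos hQ _
    have e3 : (0:ℝ) < Q ^ (q-1) := Real.rpow_pos_of_pos hQ _
    field_simp
  rw [setIntegral_congr_fun measurableSet_Ioo hpt] at hcov
  rw [MeasureTheory.integral_const_mul] at hcov
  have hABpos : (0:ℝ) < A ^ q * B ^ p := by
    have := Real.rpow_pos_of_pos hA q
    have := Real.rpow_pos_of_pos hB p
    positivity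
  rw [hcov, ← mul_assoc, inv_mul_cancel₀ hABpos.ne', one_mul]

lemma aux_x2 (x : ℝ) : (x^2 : ℝ) = x ^ (2:ℝ) := by
  rw [← Real.rpow_natCast x 2]; norm_num

lemma aux_geom1 (μ ν pp x y : ℝ) (hy : 0 < y) (hyx : y < x) (hν : 0 ≤ ν)
    (hsum : ν + pp = 2*μ + 2) :
    y ^ ν * x ^ pp * ((x^2) ^ μ)⁻¹ * ((x^2 - y^2) ^ (2:ℝ))⁻¹ ≤ 1/(x-y)^2 := by
  have hx : 0 < x := hy.trans hyx
  have hB : 0 < x^2 - y^2 := by nlinarith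
  have h1 : y ^ ν ≤ x ^ ν := Real.rpow_le_rpow hy.le hyx.le hν
  have hA : ((x^2) ^ μ) = x ^ (2*μ) := by
    rw [aux_x2, ← Real.rpow_mul hx.le]
  have h2 : x ^ ν * x ^ pp * (x ^ (2*μ))⁻¹ = x ^ 2 := by
    rw [← Real.rpow_add hx, ← Real.rpow_neg hx.le, ← Real.rpow_add hx]
    rw [show ν + pp + -(2*μ) = (2:ℝ) by linarith]
    exact (aux_x2 x).symm
  have h3 : ((x^2 - y^2) ^ (2:ℝ)) = (x^2 - y^2)^(2:ℕ) := (aux_x2 _).symm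
  have hstep : y ^ ν * x ^ pp * ((x^2) ^ μ)⁻¹ ≤ x ^ 2 := by
    rw [hA, ← h2]
    have hpos : (0:ℝ) < (x ^ (2*μ))⁻¹ := by positivity
    have hppn : (0:ℝ) ≤ x ^ pp := (Real.rpow_pos_of_pos hx pp).le
    exact mul_le_mul_of_nonneg_right (mul_le_mul_of_nonneg_right h1 hppn) hpos.le
  have hBinv : ((x^2 - y^2) ^ (2:ℝ))⁻¹ ≤ ((x*(x-y))^(2:ℕ))⁻¹ := by
    rw [h3]
    apply inv_anti₀ (pow_pos (mul_pos hx (by linarith)) 2)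
    apply pow_le_pow_left₀ (by nlinarith) (by nlinarith)
  calc y ^ ν * x ^ pp * ((x^2) ^ μ)⁻¹ * ((x^2 - y^2) ^ (2:ℝ))⁻¹
      ≤ (x^2) * ((x*(x-y))^(2:ℕ))⁻¹ := by
        apply mul_le_mul hstep hBinv
          (inv_nonneg.mpr (Real.rpow_nonneg hB.le _)) (by positivity)
  _ = 1/(x-y)^2 := by
    rw [mul_pow, mul_inv, ← mul_assoc, mul_inv_cancel₀ (pow_ne_zero 2 hx.ne'), one_mul,
      one_div]

lemma aux_geom2 (μ α x y : ℝ) (hy : 0 < y) (hyx : y < x) (hα1 : -(1/2) ≤ α) (hα2 : α ≤ 1/2)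
    (hμ : 1 ≤ μ) :
    μ ^ (1-α) * (y ^ (μ+α+1/2) * x ^ ((μ-α+1/2)+1) * ((x^2) ^ (μ+1-α))⁻¹ *
      ((x^2-y^2) ^ (α+1))⁻¹) ≤ 4/(x-y)^2 := by
  have hx : 0 < x := hy.trans hyx
  have hμ0 : (0:ℝ) < μ := by linarith
  have hB : 0 < x^2 - y^2 := by nlinarith
  set r : ℝ := y / x with hrdef
  have hr0 : 0 < r := div_pos hy hx
  have hr1 : r < 1 := (div_lt_one hx).mpr hyx
  have hyeq : y = x * r := by rw [hrdef]; field_simp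
  have h1r : (0:ℝ) < 1 - r := by linarith
  have hyp : y ^ (μ+α+1/2) = x ^ (μ+α+1/2) * r ^ (μ+α+1/2) := by
    rw [hyeq, Real.mul_rpow hx.le hr0.le]
  have hrp : r ^ (μ+α+1/2) ≤ r ^ μ := by
    rw [show μ+α+1/2 = μ + (α+1/2) by ring, Real.rpow_add hr0]
    have h2 : r ^ (α+1/2) ≤ 1 := Real.rpow_le_one hr0.le hr1.le (by linarith)
    nlinarith [Real.rpow_pos_of_pos hr0 μ, Real.rpow_pos_of_pos hr0 (α+1/2)]
  have hBb : x * (x - y) ≤ x^2 - y^2 := by nlinarith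
  have hBinv : ((x^2-y^2) ^ (α+1))⁻¹ ≤ ((x*(x-y)) ^ (α+1))⁻¹ := by
    apply inv_anti₀ (Real.rpow_pos_of_pos (mul_pos hx (by linarith)) _)
    exact Real.rpow_le_rpow (mul_pos hx (by linarith : (0:ℝ) < x - y)).le hBb (by linarith)
  have hxy : x - y = x * (1-r) := by rw [hyeq]; ring
  have hxxy : ((x*(x-y)) ^ (α+1))⁻¹ = (x ^ (α+1))⁻¹ * (x ^ (α+1))⁻¹ * ((1-r) ^ (α+1))⁻¹ := by
    rw [hxy, show x * (x * (1-r)) = (x*x) * (1-r) by ring,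
      Real.mul_rpow (by positivity) h1r.le, Real.mul_rpow hx.le hx.le]
    rw [mul_inv, mul_inv]
  have hA : ((x^2) ^ (μ+1-α))⁻¹ = (x ^ (2*(μ+1-α)))⁻¹ := by
    rw [aux_x2, ← Real.rpow_mul hx.le]
  have p1 : (0:ℝ) < μ ^ (1-α) := Real.rpow_pos_of_pos hμ0 _
  have hxpow : x ^ (μ+α+1/2) * x ^ ((μ-α+1/2)+1) * (x ^ (2*(μ+1-α)))⁻¹ *
      ((x ^ (α+1))⁻¹ * (x ^ (α+1))⁻¹) = (x ^ (2:ℕ))⁻¹ := by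
    rw [← Real.rpow_neg hx.le (2*(μ+1-α)), ← Real.rpow_neg hx.le (α+1),
      ← Real.rpow_add hx, ← Real.rpow_add hx, ← Real.rpow_add hx, ← Real.rpow_add hx]
    rw [show μ+α+1/2 + (μ-α+1/2+1) + -(2*(μ+1-α)) + (-(α+1) + -(α+1)) = -(2:ℝ) by ring]
    rw [Real.rpow_neg hx.le, aux_x2]
  have hsplit : ((1-r) ^ (α+1))⁻¹ = (1-r) ^ (1-α) * ((1-r) ^ (2:ℕ))⁻¹ := by
    rw [← Real.rpow_natCast (1-r) 2, ← Real.rpow_neg h1r.le (α+1),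
      ← Real.rpow_neg h1r.le (((2:ℕ):ℝ)), ← Real.rpow_add h1r]
    congr 1
    push_cast
    ring
  have hkey : μ ^ (1-α) * r ^ μ * ((1-r) ^ (α+1))⁻¹ ≤ 4 * ((1-r) ^ (2:ℕ))⁻¹ := by
    have h4 := aux_mu_r μ r (1-α) hμ0 hr0 hr1 (by linarith) (by linarith)
    have hnn : (0:ℝ) ≤ ((1-r) ^ (2:ℕ))⁻¹ := by positivity
    calc μ ^ (1-α) * r ^ μ * ((1-r) ^ (α+1))⁻¹
        = (μ ^ (1-α) * r ^ μ * (1-r) ^ (1-α)) * ((1-r) ^ (2:ℕ))⁻¹ := by rw [hsplit]; ring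
    _ ≤ 4 * ((1-r) ^ (2:ℕ))⁻¹ := mul_le_mul_of_nonneg_right h4 hnn
  calc μ ^ (1-α) * (y ^ (μ+α+1/2) * x ^ ((μ-α+1/2)+1) * ((x^2) ^ (μ+1-α))⁻¹ *
      ((x^2-y^2) ^ (α+1))⁻¹)
      ≤ μ ^ (1-α) * (y ^ (μ+α+1/2) * x ^ ((μ-α+1/2)+1) * ((x^2) ^ (μ+1-α))⁻¹ *
        ((x*(x-y)) ^ (α+1))⁻¹) := by
        apply mul_le_mul_of_nonneg_left _ p1.le
        apply mul_le_mul_of_nonneg_left hBinv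
        rw [hA]
        have := Real.rpow_pos_of_pos hy (μ+α+1/2)
        have := Real.rpow_pos_of_pos hx ((μ-α+1/2)+1)
        positivity
  _ = (μ ^ (1-α) * r ^ (μ+α+1/2) * ((1-r) ^ (α+1))⁻¹) * (x ^ (2:ℕ))⁻¹ := by
        rw [hyp, hA, hxxy, ← hxpow]; ring
  _ ≤ (μ ^ (1-α) * r ^ μ * ((1-r) ^ (α+1))⁻¹) * (x ^ (2:ℕ))⁻¹ := by
        have hnn : (0:ℝ) ≤ (x ^ (2:ℕ))⁻¹ := by positivity
        apply mul_le_mul_of_nonneg_right _ hnn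
        apply mul_le_mul_of_nonneg_right (mul_le_mul_of_nonneg_left hrp p1.le)
        have := Real.rpow_pos_of_pos h1r (α+1)
        positivity
  _ ≤ (4 * ((1-r) ^ (2:ℕ))⁻¹) * (x ^ (2:ℕ))⁻¹ :=
        mul_le_mul_of_nonneg_right hkey (by positivity)
  _ = 4/(x-y)^2 := by
        rw [hxy, mul_pow]
        field_simp

lemma aux_deriv (α μ y x : ℝ) (hy : 0 < y) (hyx : y < x) (hα1 : -1 < α) (hμ : 2 ≤ μ) :
    HasDerivAt (fun t => ∫ s in Ioo (0:ℝ) 1,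
        s ^ α * (1 - s) ^ (μ - 1) / (t ^ 2 - y ^ 2 * s) ^ (μ + 1))
      (∫ s in Ioo (0:ℝ) 1,
        -(2*x*(μ+1)) * (s ^ α * (1 - s) ^ (μ - 1) / (x ^ 2 - y ^ 2 * s) ^ (μ + 2))) x := by
  have hx : 0 < x := hy.trans hyx
  have hε : 0 < (x - y)/2 := by linarith
  have hδ : 0 < ((x+y)/2)^2 - y^2 := by nlinarith
  have hQpos : ∀ t : ℝ, (x+y)/2 < t → ∀ s ∈ Ioo (0:ℝ) 1, 0 < t^2 - y^2*s := by
    intro t ht s hs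
    obtain ⟨hs0, hs1⟩ := hs
    have hty : y < t := by linarith
    nlinarith
  have hball : ∀ t ∈ Metric.ball x ((x-y)/2), (x+y)/2 < t ∧ t < x + (x-y)/2 := by
    intro t ht
    rw [Metric.mem_ball, Real.dist_eq, abs_lt] at ht
    exact ⟨by linarith [ht.1], by linarith [ht.2]⟩
  have hmeas : ∀ (c e : ℝ) (t : ℝ), AEStronglyMeasurable
      (fun s : ℝ => s ^ c * (1 - s) ^ (μ - 1) / (t ^ 2 - y ^ 2 * s) ^ e)
      (volume.restrict (Ioo (0:ℝ) 1)) := by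
    intro c e t
    apply Measurable.aestronglyMeasurable
    fun_prop
  have hdct := hasDerivAt_integral_of_dominated_loc_of_deriv_le
    (μ := volume.restrict (Ioo (0:ℝ) 1))
    (F := fun t s => s ^ α * (1 - s) ^ (μ - 1) / (t ^ 2 - y ^ 2 * s) ^ (μ + 1))
    (F' := fun t s => -(2*t*(μ+1)) * (s ^ α * (1 - s) ^ (μ - 1) / (t ^ 2 - y ^ 2 * s) ^ (μ + 2)))
    (x₀ := x) (bound := fun s => (2*(x+(x-y)/2)*(μ+1)/(((x+y)/2)^2 - y^2)^(μ+2)) * s ^ α)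
    (Metric.ball_mem_nhds x hε) (Filter.Eventually.of_forall (fun t => hmeas α (μ+1) t)) ?_ ?_ ?_ ?_ ?_
  · exact hdct.2
  · -- F x integrable
    exact aux_integrable y x α (μ-1) (μ+1) hα1 (by linarith) (by linarith) (by nlinarith) hy.le
  · -- F' x measurable
    apply Measurable.aestronglyMeasurable
    fun_prop
  · -- bound
    rw [ae_restrict_iff' measurableSet_Ioo]
    refine ae_of_all _ fun s hs t ht => ?_
    obtain ⟨ht1, ht2⟩ := hball t ht
    obtain ⟨hs0, hs1⟩ := hs
    have hQ : 0 < t^2 - y^2*s := hQpos t ht1 s ⟨hs0, hs1⟩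
    have hQδ : ((x+y)/2)^2 - y^2 ≤ t^2 - y^2*s := by nlinarith
    have ht0 : 0 < t := by nlinarith
    have hsα : (0:ℝ) ≤ s ^ α := Real.rpow_nonneg hs0.le α
    have h1s : (0:ℝ) ≤ (1-s) ^ (μ-1) := Real.rpow_nonneg (by linarith) _
    have hQe : (0:ℝ) < (t^2 - y^2*s) ^ (μ+2) := Real.rpow_pos_of_pos hQ _
    have hδe : (0:ℝ) < (((x+y)/2)^2 - y^2) ^ (μ+2) := Real.rpow_pos_of_pos hδ _
    rw [Real.norm_eq_abs, abs_mul, abs_neg, abs_of_nonneg (by positivity : (0:ℝ) ≤ 2*t*(μ+1)),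
      abs_of_nonneg (by positivity)]
    have hfrac : s ^ α * (1 - s) ^ (μ - 1) / (t ^ 2 - y ^ 2 * s) ^ (μ + 2)
        ≤ s ^ α / (((x+y)/2)^2 - y^2) ^ (μ+2) := by
      apply div_le_div₀ (by positivity) _ hδe (Real.rpow_le_rpow hδ.le hQδ (by linarith))
      nlinarith [Real.rpow_le_one (by linarith : (0:ℝ) ≤ 1-s) (by linarith) (by linarith : (0:ℝ) ≤ μ-1)]
    calc 2*t*(μ+1) * (s ^ α * (1 - s) ^ (μ - 1) / (t ^ 2 - y ^ 2 * s) ^ (μ + 2))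
        ≤ 2*(x+(x-y)/2)*(μ+1) * (s ^ α / (((x+y)/2)^2 - y^2) ^ (μ+2)) := by
          apply mul_le_mul (by nlinarith) hfrac (by positivity) (by positivity)
    _ = 2*(x+(x-y)/2)*(μ+1)/(((x+y)/2)^2 - y^2)^(μ+2) * s ^ α := by ring
  · -- bound integrable
    exact (aux_int_rpow α hα1).const_mul _
  · -- differentiability
    rw [ae_restrict_iff' measurableSet_Ioo]
    refine ae_of_all _ fun s hs t ht => ?_
    obtain ⟨ht1, ht2⟩ := hball t ht
    obtain ⟨hs0, hs1⟩ := hs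
    have hQ : 0 < t^2 - y^2*s := hQpos t ht1 s ⟨hs0, hs1⟩
    have h1 : HasDerivAt (fun t : ℝ => t^2 - y^2*s) (2*t) t := by
      simpa using (hasDerivAt_pow 2 t).sub_const (y^2*s)
    have h2 := h1.rpow_const (p := μ+1) (Or.inl (ne_of_gt hQ))
    have h3 := (hasDerivAt_const t (s ^ α * (1 - s) ^ (μ - 1))).div h2
      (ne_of_gt (Real.rpow_pos_of_pos hQ _))
    have hkey : (t^2 - y^2*s) ^ (μ+1-1) / ((t^2 - y^2*s) ^ (μ+1))^2
        = ((t^2 - y^2*s) ^ (μ+2))⁻¹ := by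
      rw [pow_two ((t^2 - y^2*s) ^ (μ+1)), ← Real.rpow_add hQ, ← Real.rpow_sub hQ,
        ← Real.rpow_neg hQ.le]
      congr 1
      ring
    have e1 : s ^ α * (1 - s) ^ (μ - 1) / (t ^ 2 - y ^ 2 * s) ^ (μ + 2)
        = s ^ α * (1 - s) ^ (μ - 1) *
          ((t^2 - y^2*s) ^ (μ+1-1) / ((t^2 - y^2*s)^(μ+1))^2) := by
      rw [hkey, div_eq_mul_inv]
    convert h3 using 1
    show -(2*t*(μ+1)) * (s ^ α * (1 - s) ^ (μ - 1) / (t ^ 2 - y ^ 2 * s) ^ (μ + 2)) = _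
    rw [e1]
    ring
    · rfl
    · rfl

set_option maxHeartbeats 1000000 in
lemma aux_est (α μ p ν G x y : ℝ) (hy : 0 < y) (hyx : y < x)
    (hα1 : -(1/2:ℝ) ≤ α) (hα2 : α ≤ 1/2) (hμ : (19:ℝ)/2 ≤ μ)
    (hp : p = μ - α + 1/2) (hν : ν = μ + α + 1/2) :
    |(μ / G * (p * x ^ (p-1)) * y ^ ν) *
        (∫ s in Ioo (0:ℝ) 1, s ^ α * (1 - s) ^ (μ - 1) / (x ^ 2 - y ^ 2 * s) ^ (μ + 1)) +
      (μ / G * x ^ p * y ^ ν) *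
        ∫ s in Ioo (0:ℝ) 1,
          -(2*x*(μ+1)) * (s ^ α * (1 - s) ^ (μ - 1) / (x ^ 2 - y ^ 2 * s) ^ (μ + 2))|
      ≤ 96 * |G|⁻¹ * (1 + (2:ℝ)^(α+1) * Real.Gamma (α+1)) / (x - y)^2 := by
  have hx : 0 < x := hy.trans hyx
  have hB : 0 < x^2 - y^2 := by nlinarith
  have hμ0 : (0:ℝ) < μ := by linarith
  have hα1' : (-1:ℝ) < α := by linarith
  have hΓ0 : 0 < Real.Gamma (α + 1) := Real.Gamma_pos_of_pos (by linarith)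
  have hp0 : 0 < p := by rw [hp]; linarith
  have hν0 : 0 < ν := by rw [hν]; linarith
  have hQx : ∀ s ∈ Ioo (0:ℝ) 1, 0 < x^2 - y^2*s := by
    intro s hs; obtain ⟨hs0, hs1⟩ := hs; nlinarith
  have hbase : ∀ s : ℝ, x^2*(1-s) + (x^2-y^2)*s = x^2 - y^2*s := fun s => by ring
  -- the integrals
  obtain ⟨I, hIdef⟩ : ∃ v : ℝ,
      v = ∫ s in Ioo (0:ℝ) 1, s ^ α * (1 - s) ^ (μ - 1) / (x ^ 2 - y ^ 2 * s) ^ (μ + 1) :=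
    ⟨_, rfl⟩
  obtain ⟨J, hJdef⟩ : ∃ v : ℝ,
      v = ∫ s in Ioo (0:ℝ) 1, s ^ α * (1 - s) ^ (μ - 1) / (x ^ 2 - y ^ 2 * s) ^ (μ + 2) :=
    ⟨_, rfl⟩
  rw [← hIdef]
  have hI_int : IntegrableOn
      (fun s => s ^ α * (1 - s) ^ (μ - 1) / (x ^ 2 - y ^ 2 * s) ^ (μ + 1)) (Ioo (0:ℝ) 1) :=
    aux_integrable y x α (μ-1) (μ+1) hα1' (by linarith) (by linarith) hB hy.le
  have hJ_int : IntegrableOn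
      (fun s => s ^ α * (1 - s) ^ (μ - 1) / (x ^ 2 - y ^ 2 * s) ^ (μ + 2)) (Ioo (0:ℝ) 1) :=
    aux_integrable y x α (μ-1) (μ+2) hα1' (by linarith) (by linarith) hB hy.le
  have hptnn : ∀ (e : ℝ), ∀ s ∈ Ioo (0:ℝ) 1,
      0 ≤ s ^ α * (1 - s) ^ (μ - 1) / (x ^ 2 - y ^ 2 * s) ^ e := by
    intro e s hs
    obtain ⟨hs0, hs1⟩ := hs
    have hQ := hQx s ⟨hs0, hs1⟩
    have := Real.rpow_nonneg hs0.le α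
    have := Real.rpow_nonneg (by linarith : (0:ℝ) ≤ 1-s) (μ-1)
    have := Real.rpow_nonneg hQ.le e
    positivity
  have hJ0 : 0 ≤ J := by
    rw [hJdef]; exact setIntegral_nonneg measurableSet_Ioo (hptnn (μ+2))
  have hI0 : 0 ≤ I := by
    rw [hIdef]; exact setIntegral_nonneg measurableSet_Ioo (hptnn (μ+1))
  -- I ≤ x² J
  have hIx2J : I ≤ x^2 * J := by
    rw [hIdef, hJdef, ← MeasureTheory.integral_const_mul]
    apply setIntegral_mono_on hI_int (hJ_int.const_mul (x^2)) measurableSet_Ioo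
    intro s hs
    obtain ⟨hs0, hs1⟩ := hs
    have hQ := hQx s ⟨hs0, hs1⟩
    have hQle : x^2 - y^2*s ≤ x^2 := by nlinarith
    have hsplitQ : (x^2 - y^2*s) ^ (μ+2) = (x^2 - y^2*s) ^ (μ+1) * (x^2 - y^2*s) := by
      rw [show μ+2 = (μ+1)+1 by ring, Real.rpow_add hQ, Real.rpow_one]
    have hnum : (0:ℝ) ≤ s ^ α * (1 - s) ^ (μ - 1) :=
      mul_nonneg (Real.rpow_nonneg hs0.le _) (Real.rpow_nonneg (by linarith) _)
    calc s ^ α * (1 - s) ^ (μ - 1) / (x ^ 2 - y ^ 2 * s) ^ (μ + 1)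
        ≤ s ^ α * (1 - s) ^ (μ - 1) / (x ^ 2 - y ^ 2 * s) ^ (μ + 1) * (x^2/(x^2-y^2*s)) :=
          le_mul_of_one_le_right
            (div_nonneg hnum (Real.rpow_nonneg hQ.le _)) ((one_le_div hQ).mpr hQle)
    _ = x^2 * (s ^ α * (1 - s) ^ (μ - 1) / ((x ^ 2 - y ^ 2 * s) ^ (μ + 1) * (x^2 - y^2*s))) := by
          rw [div_mul_div_comm, mul_comm (s ^ α * (1 - s) ^ (μ - 1)) (x^2), mul_div_assoc]
    _ = x^2 * (s ^ α * (1 - s) ^ (μ - 1) / (x ^ 2 - y ^ 2 * s) ^ (μ + 2)) := by rw [hsplitQ]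
  -- J1 and J2
  obtain ⟨J1, hJ1def⟩ : ∃ v : ℝ, v = ∫ s in Ioo (0:ℝ) 1,
      s ^ ((2:ℝ)-1) * (1-s) ^ (μ-1) * (x^2*(1-s) + (x^2-y^2)*s) ^ (-((2:ℝ)+μ)) := ⟨_, rfl⟩
  obtain ⟨J2, hJ2def⟩ : ∃ v : ℝ, v = ∫ s in Ioo (0:ℝ) 1,
      s ^ ((α+1)-1) * (1-s) ^ ((μ+1-α)-1) * (x^2*(1-s) + (x^2-y^2)*s) ^ (-((α+1)+(μ+1-α))) :=
    ⟨_, rfl⟩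
  have hJ1_int : IntegrableOn (fun s =>
      s ^ ((2:ℝ)-1) * (1-s) ^ (μ-1) * (x^2*(1-s) + (x^2-y^2)*s) ^ (-((2:ℝ)+μ)))
      (Ioo (0:ℝ) 1) := by
    have hbi := aux_integrable y x 1 (μ-1) (2+μ) (by norm_num) (by linarith) (by linarith)
      hB hy.le
    apply hbi.congr_fun _ measurableSet_Ioo
    intro s hs
    have hQ := hQx s hs
    beta_reduce
    symm
    rw [hbase s, show ((2:ℝ)-1) = (1:ℝ) by norm_num, Real.rpow_neg hQ.le,
      ← div_eq_mul_inv]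
  have hJ2_int : IntegrableOn (fun s =>
      s ^ ((α+1)-1) * (1-s) ^ ((μ+1-α)-1) * (x^2*(1-s) + (x^2-y^2)*s) ^ (-((α+1)+(μ+1-α))))
      (Ioo (0:ℝ) 1) := by
    have hbi := aux_integrable y x ((α+1)-1) ((μ+1-α)-1) ((α+1)+(μ+1-α))
      (by linarith) (by linarith) (by linarith) hB hy.le
    apply hbi.congr_fun _ measurableSet_Ioo
    intro s hs
    have hQ := hQx s hs
    beta_reduce
    symm
    rw [hbase s, Real.rpow_neg hQ.le, ← div_eq_mul_inv]
  -- J ≤ 4 (J1 + J2)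
  have hJ4 : J ≤ 4 * (J1 + J2) := by
    rw [hJdef, hJ1def, hJ2def, ← MeasureTheory.integral_add hJ1_int hJ2_int,
      ← MeasureTheory.integral_const_mul]
    apply setIntegral_mono_on hJ_int (((hJ1_int.add hJ2_int)).const_mul 4) measurableSet_Ioo
    intro s hs
    obtain ⟨hs0, hs1⟩ := hs
    have hQ := hQx s ⟨hs0, hs1⟩
    have key4 : (1:ℝ) ≤ 4*(s^(1-α) + (1-s)^(1-α)) := by
      have hhalf : ∀ u:ℝ, 1/2 ≤ u → (1/4:ℝ) ≤ u^(1-α) := by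
        intro u hu1
        have e1 : ((1:ℝ)/2)^(2:ℝ) ≤ ((1:ℝ)/2)^(1-α) :=
          Real.rpow_le_rpow_of_exponent_ge (by norm_num) (by norm_num) (by linarith)
        have e2 : ((1:ℝ)/2)^(1-α) ≤ u^(1-α) :=
          Real.rpow_le_rpow (by norm_num) hu1 (by linarith)
        have e3 : ((1:ℝ)/2)^(2:ℝ) = 1/4 := by
          rw [show (2:ℝ) = ((2:ℕ):ℝ) by norm_num, Real.rpow_natCast]; norm_num
        linarith
      rcases le_total s (1/2) with h | h
      · have := hhalf (1-s) (by linarith)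
        nlinarith [Real.rpow_nonneg hs0.le (1-α)]
      · have := hhalf s h
        nlinarith [Real.rpow_nonneg (by linarith : (0:ℝ) ≤ 1-s) (1-α)]
    have hJint_nn : 0 ≤ s ^ α * (1 - s) ^ (μ - 1) / (x ^ 2 - y ^ 2 * s) ^ (μ + 2) :=
      hptnn (μ+2) s ⟨hs0, hs1⟩
    calc s ^ α * (1 - s) ^ (μ - 1) / (x ^ 2 - y ^ 2 * s) ^ (μ + 2)
        = s ^ α * (1 - s) ^ (μ - 1) / (x ^ 2 - y ^ 2 * s) ^ (μ + 2) * 1 := (mul_one _).symm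
    _ ≤ s ^ α * (1 - s) ^ (μ - 1) / (x ^ 2 - y ^ 2 * s) ^ (μ + 2) *
          (4*(s^(1-α) + (1-s)^(1-α))) := mul_le_mul_of_nonneg_left key4 hJint_nn
    _ = 4 * (s ^ ((2:ℝ)-1) * (1-s) ^ (μ-1) * (x^2*(1-s) + (x^2-y^2)*s) ^ (-((2:ℝ)+μ)) +
          s ^ ((α+1)-1) * (1-s) ^ ((μ+1-α)-1) *
            (x^2*(1-s) + (x^2-y^2)*s) ^ (-((α+1)+(μ+1-α)))) := by
        rw [hbase s, show -((2:ℝ)+μ) = -(μ+2) by ring,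
          show -((α+1)+(μ+1-α)) = -(μ+2) by ring,
          show ((2:ℝ)-1) = (1:ℝ) by norm_num, show (α+1)-1 = α by ring,
          show (μ+1-α)-1 = μ-α by ring, Real.rpow_neg hQ.le (μ+2)]
        have m1 : s^α * s^(1-α) = s^(1:ℝ) := by
          rw [← Real.rpow_add hs0]; norm_num
        have m2 : (1-s)^(μ-1) * (1-s)^(1-α) = (1-s)^(μ-α) := by
          rw [← Real.rpow_add (by linarith : (0:ℝ) < 1-s)]; congr 1; ring
        rw [div_eq_mul_inv, ← m1, ← m2]
        ring
  -- beta bounds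
  have hJ1b : J1 ≤ ((x^2) ^ μ)⁻¹ * ((x^2-y^2) ^ (2:ℝ))⁻¹ * ((1/(μ-1)) ^ (2:ℝ)) := by
    rw [hJ1def, aux_beta_subst 2 μ (x^2) (x^2-y^2) two_pos (by linarith) hB (by nlinarith [sq_nonneg y])]
    have hbl1 := aux_beta_le ((2:ℝ)-1) (μ-1) (by norm_num) (by linarith)
    rw [show ((2:ℝ)-1)+1 = 2 by norm_num, Real.Gamma_two, mul_one] at hbl1
    rw [mul_inv]
    have hinv : (0:ℝ) ≤ (((x^2):ℝ) ^ μ)⁻¹ * (((x^2-y^2):ℝ) ^ (2:ℝ))⁻¹ := by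
      have := Real.rpow_nonneg (by positivity : (0:ℝ) ≤ x^2) μ
      have := Real.rpow_nonneg hB.le (2:ℝ)
      positivity
    exact mul_le_mul_of_nonneg_left hbl1 hinv
  have hJ2b : J2 ≤ ((x^2) ^ (μ+1-α))⁻¹ * ((x^2-y^2) ^ (α+1))⁻¹ *
      ((1/(μ-α)) ^ (α+1) * Real.Gamma (α+1)) := by
    rw [hJ2def, aux_beta_subst (α+1) (μ+1-α) (x^2) (x^2-y^2) (by linarith) (by linarith)
      hB (by nlinarith [sq_nonneg y])]
    have hbl2 := aux_beta_le ((α+1)-1) ((μ+1-α)-1) (by linarith) (by linarith)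
    rw [show ((α:ℝ)+1)-1+1 = α+1 by ring] at hbl2
    conv at hbl2 => rhs; rw [show ((μ:ℝ)+1-α)-1 = μ-α by ring]
    rw [mul_inv]
    have hinv : (0:ℝ) ≤ (((x^2):ℝ) ^ (μ+1-α))⁻¹ * (((x^2-y^2):ℝ) ^ (α+1))⁻¹ := by
      have := Real.rpow_nonneg (by positivity : (0:ℝ) ≤ x^2) (μ+1-α)
      have := Real.rpow_nonneg hB.le (α+1)
      positivity
    exact mul_le_mul_of_nonneg_left hbl2 hinv
  -- final assembly
  have hIF' : (∫ s in Ioo (0:ℝ) 1,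
      -(2*x*(μ+1)) * (s ^ α * (1 - s) ^ (μ - 1) / (x ^ 2 - y ^ 2 * s) ^ (μ + 2)))
      = -(2*x*(μ+1)) * J := by
    rw [hJdef]; exact MeasureTheory.integral_const_mul _ _
  rw [hIF']
  have hyν : (0:ℝ) < y ^ ν := Real.rpow_pos_of_pos hy ν
  have hxp : (0:ℝ) < x ^ p := Real.rpow_pos_of_pos hx p
  have hxp1 : (0:ℝ) < x ^ (p-1) := Real.rpow_pos_of_pos hx (p-1)
  have hxpp1 : (0:ℝ) < x ^ (p+1) := Real.rpow_pos_of_pos hx (p+1)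
  have hGn : (0:ℝ) ≤ |G|⁻¹ := by positivity
  have hJ1nn : 0 ≤ y ^ ν * x ^ (p+1) := le_of_lt (mul_pos hyν hxpp1)
  have habs1 : |μ / G * (p * x ^ (p-1)) * y ^ ν * I| = μ*|G|⁻¹*(p * x ^ (p-1))*(y ^ ν)*I := by
    rw [abs_mul, abs_mul, abs_mul, abs_div, abs_of_pos hμ0,
      abs_of_pos (mul_pos hp0 hxp1), abs_of_pos hyν, abs_of_nonneg hI0, div_eq_mul_inv]
  have habs2 : |μ / G * x ^ p * y ^ ν * (-(2*x*(μ+1)) * J)|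
      = μ*|G|⁻¹*(x ^ p)*(y ^ ν)*(2*x*(μ+1)*J) := by
    rw [abs_mul, abs_mul, abs_mul, abs_mul, abs_neg, abs_div, abs_of_pos hμ0,
      abs_of_pos hxp, abs_of_pos hyν, abs_of_nonneg hJ0,
      abs_of_pos (by positivity : (0:ℝ) < 2*x*(μ+1)), div_eq_mul_inv]
  have hxpa : x ^ (p-1) * x^2 = x ^ (p+1) := by
    rw [aux_x2 x, ← Real.rpow_add hx]; congr 1; ring
  have hxpb : x ^ (p+1) = x ^ p * x := by
    rw [Real.rpow_add hx, Real.rpow_one]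
  have hpμ : p ≤ μ + 1 := by rw [hp]; linarith
  -- T1
  have hgeo1 := aux_geom1 μ ν (p+1) x y hy hyx hν0.le (by rw [hν, hp]; ring)
  have hnum1 : 12*μ*(μ+1)*((1/(μ-1)) ^ (2:ℝ)) ≤ 96 := by
    rw [show (2:ℝ) = ((2:ℕ):ℝ) by norm_num, Real.rpow_natCast, div_pow, one_pow,
      mul_one_div, div_le_iff₀ (pow_pos (by linarith : (0:ℝ) < μ-1) 2)]
    nlinarith only [hμ]
  have hT1 : 12*μ*(μ+1)*|G|⁻¹*(y ^ ν * x ^ (p+1) * J1) ≤ 96*|G|⁻¹*(1/(x-y)^2) := by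
    have sub1 : y ^ ν * x ^ (p+1) * J1
        ≤ (y ^ ν * x ^ (p+1) * ((x^2) ^ μ)⁻¹ * ((x^2-y^2) ^ (2:ℝ))⁻¹) * ((1/(μ-1)) ^ (2:ℝ)) := by
      calc y ^ ν * x ^ (p+1) * J1
          ≤ y ^ ν * x ^ (p+1) * (((x^2) ^ μ)⁻¹ * ((x^2-y^2) ^ (2:ℝ))⁻¹ * ((1/(μ-1)) ^ (2:ℝ))) :=
            mul_le_mul_of_nonneg_left hJ1b hJ1nn
      _ = (y ^ ν * x ^ (p+1) * ((x^2) ^ μ)⁻¹ * ((x^2-y^2) ^ (2:ℝ))⁻¹) * ((1/(μ-1)) ^ (2:ℝ)) := by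
            ring
    have hc2 : (0:ℝ) ≤ (1/(μ-1)) ^ (2:ℝ) :=
      Real.rpow_nonneg (one_div_nonneg.mpr (by linarith)) _
    calc 12*μ*(μ+1)*|G|⁻¹*(y ^ ν * x ^ (p+1) * J1)
        ≤ 12*μ*(μ+1)*|G|⁻¹*((1/(x-y)^2) * ((1/(μ-1)) ^ (2:ℝ))) := by
          apply mul_le_mul_of_nonneg_left _ (by positivity)
          exact sub1.trans (mul_le_mul_of_nonneg_right hgeo1 hc2)
    _ = (12*μ*(μ+1)*((1/(μ-1)) ^ (2:ℝ))) * (|G|⁻¹*(1/(x-y)^2)) := by ring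
    _ ≤ 96 * (|G|⁻¹*(1/(x-y)^2)) := by
          apply mul_le_mul_of_nonneg_right hnum1
          positivity
    _ = 96*|G|⁻¹*(1/(x-y)^2) := by ring
  -- T2
  have hgeo2pre := aux_geom2 μ α x y hy hyx hα1 hα2 (by linarith)
  have hgeo2 : μ ^ (1-α) * (y ^ ν * x ^ (p+1) * ((x^2) ^ (μ+1-α))⁻¹ *
      ((x^2-y^2) ^ (α+1))⁻¹) ≤ 4/(x-y)^2 := by
    rw [hν, hp]; exact hgeo2pre
  have hGEOnn : (0:ℝ) ≤ y ^ ν * x ^ (p+1) * ((x^2) ^ (μ+1-α))⁻¹ * ((x^2-y^2) ^ (α+1))⁻¹ := by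
    have h1 := Real.rpow_nonneg (by positivity : (0:ℝ) ≤ x^2) (μ+1-α)
    have h2 := Real.rpow_nonneg hB.le (α+1)
    positivity
  have hnum2 : μ*(μ+1)*((1/(μ-α)) ^ (α+1)) ≤ 2^(α+2) * μ ^ (1-α) := by
    have n1 : (1:ℝ)/(μ-α) ≤ 2/μ := by
      rw [div_le_div_iff₀ (by linarith) hμ0]; linarith only [hμ, hα2]
    have n2 : ((1:ℝ)/(μ-α)) ^ (α+1) ≤ ((2:ℝ)/μ) ^ (α+1) :=
      Real.rpow_le_rpow (one_div_nonneg.mpr (by linarith)) n1 (by linarith)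
    have n3 : ((2:ℝ)/μ) ^ (α+1) = 2^(α+1) * (μ^(α+1))⁻¹ := by
      rw [Real.div_rpow (by norm_num) hμ0.le, div_eq_mul_inv]
    have n5 : μ^(2:ℝ) * (μ^(α+1))⁻¹ = μ^(1-α) := by
      rw [← Real.rpow_neg hμ0.le, ← Real.rpow_add hμ0]; congr 1; ring
    have n6 : μ*(μ+1) ≤ 2*μ^(2:ℝ) := by
      rw [show μ^(2:ℝ) = μ^(2:ℕ) by rw [← Real.rpow_natCast μ 2]; norm_num]
      nlinarith only [hμ]
    have hmp : (0:ℝ) < (μ^(α+1))⁻¹ := by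
      have := Real.rpow_pos_of_pos hμ0 (α+1); positivity
    have h2a : (2:ℝ)^(α+2) = 2^(α+1)*2 := by
      rw [show α+2 = (α+1)+1 by ring, Real.rpow_add (by norm_num : (0:ℝ) < 2), Real.rpow_one]
    calc μ*(μ+1)*((1/(μ-α)) ^ (α+1)) ≤ μ*(μ+1)*(2^(α+1) * (μ^(α+1))⁻¹) := by
          rw [← n3]
          exact mul_le_mul_of_nonneg_left n2 (by positivity)
    _ = (μ*(μ+1)) * ((μ^(α+1))⁻¹ * 2^(α+1)) := by ring
    _ ≤ (2*μ^(2:ℝ)) * ((μ^(α+1))⁻¹ * 2^(α+1)) := by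
          apply mul_le_mul_of_nonneg_right n6
          have := Real.rpow_nonneg (by norm_num : (0:ℝ) ≤ 2) (α+1)
          positivity
    _ = 2^(α+2) * (μ^(2:ℝ) * (μ^(α+1))⁻¹) := by rw [h2a]; ring
    _ = 2^(α+2) * μ^(1-α) := by rw [n5]
  have hT2 : 12*μ*(μ+1)*|G|⁻¹*(y ^ ν * x ^ (p+1) * J2)
      ≤ 96*|G|⁻¹*(2^(α+1) * Real.Gamma (α+1) * (1/(x-y)^2)) := by
    have sub2 : y ^ ν * x ^ (p+1) * J2
        ≤ (y ^ ν * x ^ (p+1) * ((x^2) ^ (μ+1-α))⁻¹ * ((x^2-y^2) ^ (α+1))⁻¹) *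
          ((1/(μ-α)) ^ (α+1) * Real.Gamma (α+1)) := by
      calc y ^ ν * x ^ (p+1) * J2
          ≤ y ^ ν * x ^ (p+1) * (((x^2) ^ (μ+1-α))⁻¹ * ((x^2-y^2) ^ (α+1))⁻¹ *
              ((1/(μ-α)) ^ (α+1) * Real.Gamma (α+1))) :=
            mul_le_mul_of_nonneg_left hJ2b hJ1nn
      _ = _ := by ring
    have hc3 : (0:ℝ) ≤ (1/(μ-α)) ^ (α+1) :=
      Real.rpow_nonneg (one_div_nonneg.mpr (by linarith)) _
    calc 12*μ*(μ+1)*|G|⁻¹*(y ^ ν * x ^ (p+1) * J2)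
        ≤ 12*μ*(μ+1)*|G|⁻¹*((y ^ ν * x ^ (p+1) * ((x^2) ^ (μ+1-α))⁻¹ *
            ((x^2-y^2) ^ (α+1))⁻¹) * ((1/(μ-α)) ^ (α+1) * Real.Gamma (α+1))) := by
          exact mul_le_mul_of_nonneg_left sub2 (by positivity)
    _ = (12*|G|⁻¹*Real.Gamma (α+1)) * ((μ*(μ+1)*((1/(μ-α)) ^ (α+1))) *
          (y ^ ν * x ^ (p+1) * ((x^2) ^ (μ+1-α))⁻¹ * ((x^2-y^2) ^ (α+1))⁻¹)) := by ring
    _ ≤ (12*|G|⁻¹*Real.Gamma (α+1)) * ((2^(α+2) * μ ^ (1-α)) *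
          (y ^ ν * x ^ (p+1) * ((x^2) ^ (μ+1-α))⁻¹ * ((x^2-y^2) ^ (α+1))⁻¹)) := by
          apply mul_le_mul_of_nonneg_left _ (by positivity)
          exact mul_le_mul_of_nonneg_right hnum2 hGEOnn
    _ = (12*|G|⁻¹*Real.Gamma (α+1)*2^(α+2)) * (μ ^ (1-α) *
          (y ^ ν * x ^ (p+1) * ((x^2) ^ (μ+1-α))⁻¹ * ((x^2-y^2) ^ (α+1))⁻¹)) := by ring
    _ ≤ (12*|G|⁻¹*Real.Gamma (α+1)*2^(α+2)) * (4/(x-y)^2) := by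
          apply mul_le_mul_of_nonneg_left hgeo2
          have := Real.rpow_nonneg (by norm_num : (0:ℝ) ≤ 2) (α+2)
          positivity
    _ = 96*|G|⁻¹*(2^(α+1) * Real.Gamma (α+1) * (1/(x-y)^2)) := by
          rw [show (2:ℝ)^(α+2) = 2^(α+1)*2 by
            rw [show α+2 = (α+1)+1 by ring, Real.rpow_add (by norm_num : (0:ℝ) < 2),
              Real.rpow_one]]
          ring
  -- put it together
  calc |μ / G * (p * x ^ (p-1)) * y ^ ν * I + μ / G * x ^ p * y ^ ν * (-(2*x*(μ+1)) * J)|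
      ≤ |μ / G * (p * x ^ (p-1)) * y ^ ν * I| + |μ / G * x ^ p * y ^ ν * (-(2*x*(μ+1)) * J)| :=
        abs_add_le _ _
  _ = μ*|G|⁻¹*(p * x ^ (p-1))*(y ^ ν)*I + μ*|G|⁻¹*(x ^ p)*(y ^ ν)*(2*x*(μ+1)*J) := by
        rw [habs1, habs2]
  _ ≤ μ*|G|⁻¹*(p * x ^ (p-1))*(y ^ ν)*(x^2*J) + μ*|G|⁻¹*(x ^ p)*(y ^ ν)*(2*x*(μ+1)*J) := by
        apply add_le_add_left
        apply mul_le_mul_of_nonneg_left hIx2J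
        positivity
  _ = μ*|G|⁻¹*(y ^ ν)*((p*(x ^ (p-1)*x^2) + 2*(μ+1)*(x ^ p*x))*J) := by ring
  _ = μ*|G|⁻¹*(y ^ ν)*((p*x^(p+1) + 2*(μ+1)*x^(p+1))*J) := by rw [hxpa, ← hxpb]
  _ ≤ μ*|G|⁻¹*(y ^ ν)*((3*(μ+1)*x^(p+1))*J) := by
        apply mul_le_mul_of_nonneg_left _ (by positivity)
        apply mul_le_mul_of_nonneg_right _ hJ0
        linarith only [mul_le_mul_of_nonneg_right hpμ hxpp1.le]
  _ ≤ μ*|G|⁻¹*(y ^ ν)*((3*(μ+1)*x^(p+1))*(4*(J1+J2))) := by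
        apply mul_le_mul_of_nonneg_left _ (by positivity)
        apply mul_le_mul_of_nonneg_left hJ4
        positivity
  _ = 12*μ*(μ+1)*|G|⁻¹*(y ^ ν * x ^ (p+1) * J1) + 12*μ*(μ+1)*|G|⁻¹*(y ^ ν * x ^ (p+1) * J2) := by
        ring
  _ ≤ 96*|G|⁻¹*(1/(x-y)^2) + 96*|G|⁻¹*(2^(α+1) * Real.Gamma (α+1) * (1/(x-y)^2)) :=
        add_le_add hT1 hT2
  _ = 96 * |G|⁻¹ * (1 + (2:ℝ)^(α+1) * Real.Gamma (α+1)) / (x - y)^2 := by ring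


/-- The Hankel transplantation kernel `K_{a+k}^{b+k}(x,y)` in the region `0 < y < x`,
given by its convergent integral representation. -/
noncomputable def transplantKernel (a b : ℝ) (k : ℕ) (x y : ℝ) : ℝ :=
  (((a + b) / 2 + k) / (Real.Gamma ((b - a) / 2) * Real.Gamma ((a - b + 2) / 2))) *
    x ^ (b + k + 1 / 2) * y ^ (a + k + 1 / 2) *
    ∫ s in Set.Ioo (0 : ℝ) 1,
      s ^ ((a - b) / 2) * (1 - s) ^ ((a + b) / 2 + k - 1) /
        (x ^ 2 - y ^ 2 * s) ^ ((a + b) / 2 + k + 1)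

/-- Uniform smoothness estimate for the transplantation kernel in the region `0 < y < x`:
`|∂K_{a+k}^{b+k}(x,y)/∂x| ≤ C₂ / (x - y)²` with `C₂` independent of `k ≥ 10`. -/
theorem transplantKernel_deriv_bound_below (a b : ℝ) (ha : -1 / 2 ≤ a) (hb : -1 / 2 ≤ b)
    (hab : 0 < |a - b|) (hab' : |a - b| ≤ 1) :
    ∃ C₂ : ℝ, ∀ (k : ℕ), 10 ≤ k → ∀ x y : ℝ, 0 < y → y < x →
      |deriv (fun t => transplantKernel a b k t y) x| ≤ C₂ / (x - y) ^ 2 := by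
  obtain ⟨hab1, hab2⟩ := abs_le.mp hab'
  refine ⟨96 * |Real.Gamma ((b - a) / 2) * Real.Gamma ((a - b + 2) / 2)|⁻¹ *
    (1 + (2:ℝ) ^ ((a - b) / 2 + 1) * Real.Gamma ((a - b) / 2 + 1)), ?_⟩
  intro k hk x y hy hyx
  have hx : 0 < x := hy.trans hyx
  have hk10 : (10:ℝ) ≤ (k:ℝ) := by exact_mod_cast hk
  simp only [transplantKernel]
  generalize hG : Real.Gamma ((b - a) / 2) * Real.Gamma ((a - b + 2) / 2) = G
  generalize hα : (a - b) / 2 = α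
  generalize hμeq : (a + b) / 2 + (k:ℝ) = μ
  generalize hpeq : b + (k:ℝ) + 1/2 = p
  generalize hνeq : a + (k:ℝ) + 1/2 = ν
  have hα1 : -(1/2:ℝ) ≤ α := by rw [← hα]; linarith
  have hα2 : α ≤ 1/2 := by rw [← hα]; linarith
  have hμ19 : (19:ℝ)/2 ≤ μ := by rw [← hμeq]; linarith
  have hp_eq : p = μ - α + 1/2 := by rw [← hpeq, ← hμeq, ← hα]; ring
  have hν_eq : ν = μ + α + 1/2 := by rw [← hνeq, ← hμeq, ← hα]; ring
  have hD := aux_deriv α μ y x hy hyx (by linarith) (by linarith)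
  have hg : HasDerivAt (fun t : ℝ => μ / G * t ^ p * y ^ ν)
      (μ / G * (p * x ^ (p-1)) * y ^ ν) x :=
    ((Real.hasDerivAt_rpow_const (p := p) (Or.inl hx.ne')).const_mul (μ / G)).mul_const _
  have hfull : HasDerivAt
      (fun t => μ / G * t ^ p * y ^ ν *
        ∫ s in Ioo (0:ℝ) 1, s ^ α * (1 - s) ^ (μ - 1) / (t ^ 2 - y ^ 2 * s) ^ (μ + 1))
      ((μ / G * (p * x ^ (p-1)) * y ^ ν) *
          (∫ s in Ioo (0:ℝ) 1, s ^ α * (1 - s) ^ (μ - 1) / (x ^ 2 - y ^ 2 * s) ^ (μ + 1)) +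
        (μ / G * x ^ p * y ^ ν) *
          ∫ s in Ioo (0:ℝ) 1,
            -(2*x*(μ+1)) * (s ^ α * (1 - s) ^ (μ - 1) / (x ^ 2 - y ^ 2 * s) ^ (μ + 2))) x :=
    hg.mul hD
  rw [hfull.deriv]
  exact aux_est α μ p ν G x y hy hyx hα1 hα2 hμ19 hp_eq hν_eq
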